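/- Let X be an AN-space with norm functional 𝟙. Then for every x'' in the bidual cone X''₊ one has ‖x''‖ = ⟨x'', 𝟙⟩. -/

import Mathlib

theorem bidual_norm_eq_pairing_with_norm_functional
    {X : Type*} [NormedAddCommGroup X] [NormedSpace ℝ X]
    (C : Set X) (hclosed : IsClosed C)
    (hadd : ∀ x ∈ C, ∀ y ∈ C, x + y ∈ C)
    (hsmul : ∀ (α : ℝ), 0 ≤ α → ∀ x ∈ C, α • x ∈ C)
    (hconvex : Convex ℝ C)
    (hproper : C ∩ (-C) = {0})
    (hgen : ∀ x : X, ∃ y ∈ C, ∃ z ∈ C, x = y - z)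
    (haddnorm : ∀ x ∈ C, ∀ y ∈ C, ‖x + y‖ = ‖x‖ + ‖y‖)
    (e : StrongDual ℝ X) (he : ∀ x ∈ C, e x = ‖x‖) :
    ∀ x'' : StrongDual ℝ (StrongDual ℝ X),
      (∀ x' : StrongDual ℝ X, (∀ x ∈ C, 0 ≤ x' x) → 0 ≤ x'' x') →
      ‖x''‖ = x'' e := by
  intro x'' hpos
  have hxe : 0 ≤ x'' e := hpos e (fun x hx => (he x hx) ▸ norm_nonneg x)
  have hnorme : ‖e‖ ≤ 1 := by
    refine ContinuousLinearMap.opNorm_le_bound e zero_le_one ?_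
    intro x
    obtain ⟨y, hy, z, hz, rfl⟩ := hgen x
    rw [map_sub, he y hy, he z hz, one_mul, Real.norm_eq_abs]
    exact abs_norm_sub_norm_le y z
  refine le_antisymm ?_ ?_
  · refine ContinuousLinearMap.opNorm_le_bound x'' hxe ?_
    intro x'
    have key : ∀ s : ℝ, s = 1 ∨ s = -1 → 0 ≤ x'' (‖x'‖ • e + s • x') := by
      intro s hs
      refine hpos _ ?_
      intro x hx
      simp only [ContinuousLinearMap.add_apply, ContinuousLinearMap.smul_apply,
        smul_eq_mul, he x hx]
      have h1 : ‖x' x‖ ≤ ‖x'‖ * ‖x‖ := ContinuousLinearMap.le_opNorm x' x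
      rw [Real.norm_eq_abs] at h1
      rcases hs with rfl | rfl
      · have := neg_abs_le (x' x); linarith
      · have := le_abs_self (x' x); linarith
    have h1 := key 1 (Or.inl rfl)
    have h2 := key (-1) (Or.inr rfl)
    simp only [map_add, map_smul, one_smul, neg_one_smul, smul_eq_mul, map_neg] at h1 h2
    rw [Real.norm_eq_abs, abs_le]
    constructor <;> nlinarith [norm_nonneg x']
  · calc x'' e ≤ ‖x'' e‖ := le_abs_self _
      _ ≤ ‖x''‖ * ‖e‖ := ContinuousLinearMap.le_opNorm x'' e
      _ ≤ ‖x''‖ * 1 := by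
          exact mul_le_mul_of_nonneg_left hnorme (norm_nonneg x'')
      _ = ‖x''‖ := mul_one _
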